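/- Let L ⊣ R be an adjoint pair of endofunctors of a category C. Suppose (L, Δ, ϵ) is a comonad structure on L, and equip R with the monad structure (R, μ, ι), where μ : R∘R ⟶ R is the mate (conjugate) of Δ : L ⟶ L∘L under the adjunctions L ⊣ R and L∘L ⊣ R∘R, and ι : 1_C ⟶ R is the mate of ϵ : L ⟶ 1_C. Let (I, J) be an adjoint pair of endofunctors of C such that I∘L = L∘I, IΔ = ΔI, and Iϵ = ϵI. Then the cofree coalgebra functor F^L : C ⥤ C^L (x ↦ (L(x), Δ_x)) into the Eilenberg–Moore category of the comonad is I-separable if and only if the free algebra functor F_R : C ⥤ C_R (x ↦ (R(x), μ_x)) into the Eilenberg–Moore category of the monad is J-separable. -/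

import Mathlib

open CategoryTheory

/-- A functor `F : C ⥤ D` is *`I`-separable* (separable of the second kind) if there is a
natural transformation `P : Hom_D(F −, F −) ⟶ Hom_X(I −, I −)` of functors `Cᵒᵖ × C ⥤ Set`
such that `P (F.map f) = I.map f` for all `f`. -/
def ISeparable {C : Type*} [Category C] {D : Type*} [Category D]
    {X : Type*} [Category X] (F : C ⥤ D) (I : C ⥤ X) : Prop :=
  ∃ P : ∀ a b : C, (F.obj a ⟶ F.obj b) → (I.obj a ⟶ I.obj b),
    (∀ (a' a b b' : C) (u : a' ⟶ a) (v : b ⟶ b') (h : F.obj a ⟶ F.obj b),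
        P a' b' (F.map u ≫ h ≫ F.map v) = I.map u ≫ P a b h ≫ I.map v) ∧
    (∀ (a b : C) (f : a ⟶ b), P a b (F.map f) = I.map f)

universe v u

/-- Auxiliary normalized form of separability relative to a comonad `L`:
a natural family on `Hom (L a) b` with `T (ε ≫ f) = I.map f`. -/
def SepT {C : Type u} [Category.{v} C] (L : Comonad C) (I : C ⥤ C) : Prop :=
  ∃ T : ∀ a b : C, (L.obj a ⟶ b) → (I.obj a ⟶ I.obj b),
    (∀ (a' a b b' : C) (u : a' ⟶ a) (v : b ⟶ b') (f : L.obj a ⟶ b),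
        T a' b' (L.map u ≫ f ≫ v) = I.map u ≫ T a b f ≫ I.map v) ∧
    (∀ (a b : C) (f : a ⟶ b), T a b (L.ε.app a ≫ f) = I.map f)

section Aux

variable {C : Type u} [Category.{v} C]

lemma natTrans_heq_app {D : Type*} [Category D] {F F' G G' : C ⥤ D}
    (hF : F = F') (hG : G = G') {α : F ⟶ G} {β : F' ⟶ G'} (h : HEq α β) (x : C) :
    α.app x = eqToHom (by rw [hF]) ≫ β.app x ≫ eqToHom (by rw [hG]) := by
  subst hF; subst hG; cases h; simp

/-- Lemma A: separability of the cofree functor in normalized form. -/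
lemma cofree_iff_sepT (L : Comonad C) (I : C ⥤ C) :
    ISeparable L.cofree I ↔ SepT L I := by
  have hsymm : ∀ (a b : C) (f : a ⟶ b),
      (L.adj.homEquiv (L.cofree.obj a) b).symm (L.cofree.map f) = L.ε.app a ≫ f := by
    intro a b f
    rw [Adjunction.homEquiv_counit]
    have h1 : L.adj.counit.app b = L.ε.app b := by simp [Comonad.adj_counit]; rfl
    have h2 : L.forget.map (L.cofree.map f) = L.map f := rfl
    rw [h1, h2]
    have := L.ε.naturality f
    exact this
  constructor
  · rintro ⟨P, Pnat, Pnorm⟩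
    refine ⟨fun a b f => P a b (L.adj.homEquiv (L.cofree.obj a) b f), ?_, ?_⟩
    · intro a' a b b' u v f
      dsimp only
      have h : (L.adj.homEquiv (L.cofree.obj a') b') (L.map u ≫ f ≫ v)
          = L.cofree.map u ≫ (L.adj.homEquiv (L.cofree.obj a) b) f ≫ L.cofree.map v := by
        have h1 : L.map u = L.forget.map (L.cofree.map u) := rfl
        erw [h1, Adjunction.homEquiv_naturality_left, Adjunction.homEquiv_naturality_right]
      erw [h, Pnat]
    · intro a b f
      dsimp only
      have h : (L.adj.homEquiv (L.cofree.obj a) b) (L.ε.app a ≫ f) = L.cofree.map f := by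
        erw [← hsymm a b f, Equiv.apply_symm_apply]
      erw [h, Pnorm]
  · rintro ⟨T, Tnat, Tnorm⟩
    refine ⟨fun a b φ => T a b ((L.adj.homEquiv (L.cofree.obj a) b).symm φ), ?_, ?_⟩
    · intro a' a b b' u v φ
      dsimp only
      have h : (L.adj.homEquiv (L.cofree.obj a') b').symm
            (L.cofree.map u ≫ φ ≫ L.cofree.map v)
          = L.map u ≫ (L.adj.homEquiv (L.cofree.obj a) b).symm φ ≫ v := by
        rw [← Category.assoc, Adjunction.homEquiv_naturality_right_symm,
          Adjunction.homEquiv_naturality_left_symm, Category.assoc]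
        rfl
      erw [h, Tnat]
    · intro a b f
      dsimp only
      rw [hsymm, Tnorm]

/-- Lemma B: separability of the free functor in normalized form. -/
lemma free_iff_sepT (L : Comonad C) (R : Monad C) (adj : L.toFunctor ⊣ R.toFunctor)
    (hη : R.η = conjugateEquiv (Adjunction.id (C := C)) adj L.ε) (J : C ⥤ C) :
    ISeparable R.free J ↔ SepT L J := by
  -- the unit of the monad componentwise
  have hηc : ∀ c : C, R.η.app c = adj.unit.app c ≫ R.map (L.ε.app c) := by
    intro c
    rw [hη]
    have := unit_conjugateEquiv (Adjunction.id (C := C)) adj L.ε c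
    simpa [Adjunction.id] using this.symm
  -- transport across `adj`
  have key : ∀ (a b : C) (f : a ⟶ b),
      adj.homEquiv a b (L.ε.app a ≫ f) = f ≫ R.η.app b := by
    intro a b f
    rw [Adjunction.homEquiv_unit, hηc]
    have h5 : L.map f ≫ L.ε.app b = L.ε.app a ≫ f := by simpa using L.ε.naturality f
    have h4 : adj.unit.app a ≫ R.map (L.map f) = f ≫ adj.unit.app b := by
      simpa using (adj.unit.naturality f).symm
    rw [show (L.ε.app a ≫ f : L.obj a ⟶ b) = L.map f ≫ L.ε.app b from h5.symm,
      Functor.map_comp, ← Category.assoc, h4, Category.assoc]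
  -- homEquiv of the free-forget adjunction on free maps
  have keyR : ∀ (a b : C) (f : a ⟶ b),
      R.adj.homEquiv a (R.free.obj b) (R.free.map f) = f ≫ R.η.app b := by
    intro a b f
    rw [Adjunction.homEquiv_unit]
    have h1 : R.adj.unit.app a = R.η.app a := by simp [Monad.adj_unit]; rfl
    have h2 : R.forget.map (R.free.map f) = R.map f := rfl
    rw [h1, h2]
    have := R.η.naturality f
    exact this.symm
  constructor
  · rintro ⟨P, Pnat, Pnorm⟩
    refine ⟨fun a b f => P a b ((R.adj.homEquiv a (R.free.obj b)).symm
      (adj.homEquiv a b f)), ?_, ?_⟩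
    · intro a' a b b' u v f
      dsimp only
      have h1 : adj.homEquiv a' b' (L.map u ≫ f ≫ v)
          = u ≫ adj.homEquiv a b f ≫ R.map v := by
        rw [Adjunction.homEquiv_naturality_left, Adjunction.homEquiv_naturality_right]
      have h2 : (R.adj.homEquiv a' (R.free.obj b')).symm
            (u ≫ adj.homEquiv a b f ≫ R.map v)
          = R.free.map u ≫ (R.adj.homEquiv a (R.free.obj b)).symm
              (adj.homEquiv a b f) ≫ R.free.map v := by
        erw [Adjunction.homEquiv_counit, Adjunction.homEquiv_counit,
          Functor.map_comp, Functor.map_comp, Category.assoc, Category.assoc]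
        congr 1
        rw [Category.assoc]
        congr 1
        exact R.adj.counit.naturality (R.free.map v)
      erw [h1, h2, Pnat]
    · intro a b f
      dsimp only
      rw [key, ← keyR, Equiv.symm_apply_apply, Pnorm]
  · rintro ⟨T, Tnat, Tnorm⟩
    refine ⟨fun a b φ => T a b ((adj.homEquiv a b).symm
      (R.adj.homEquiv a (R.free.obj b) φ)), ?_, ?_⟩
    · intro a' a b b' u v φ
      dsimp only
      have h1 : R.adj.homEquiv a' (R.free.obj b') (R.free.map u ≫ φ ≫ R.free.map v)
          = u ≫ R.adj.homEquiv a (R.free.obj b) φ ≫ R.map v := by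
        have h0 : R.free.map u = R.free.map u := rfl
        rw [Adjunction.homEquiv_naturality_left, Adjunction.homEquiv_naturality_right]
        rfl
      have h2 : (adj.homEquiv a' b').symm
            (u ≫ R.adj.homEquiv a (R.free.obj b) φ ≫ R.map v)
          = L.map u ≫ (adj.homEquiv a b).symm (R.adj.homEquiv a (R.free.obj b) φ) ≫ v := by
        erw [Adjunction.homEquiv_counit, Adjunction.homEquiv_counit,
          Functor.map_comp, Functor.map_comp, Category.assoc, Category.assoc]
        congr 1
        rw [Category.assoc]
        congr 1
        exact adj.counit.naturality v
      rw [h1, h2, Tnat]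
    · intro a b f
      dsimp only
      rw [keyR, ← key, Equiv.symm_apply_apply, Tnorm]

end Aux

/-- Let `L ⊣ R` with `L` a comonad whose mate monad structure is carried by `R`
(`μ` the conjugate of `δ`, `η` the conjugate of `ε`), and let `I ⊣ J` be an adjoint pair of
endofunctors with `I` commuting with the comonad structure of `L`. Then the cofree
coalgebra functor `F^L` is `I`-separable iff the free algebra functor `F_R` is
`J`-separable. -/
theorem cofree_ISeparable_iff_free_JSeparable {C : Type u} [Category.{v} C]
    (L : Comonad C) (R : Monad C) (adj : L.toFunctor ⊣ R.toFunctor)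
    (hμ : R.μ = conjugateEquiv (adj.comp adj) adj L.δ)
    (hη : R.η = conjugateEquiv (Adjunction.id (C := C)) adj L.ε)
    (I J : C ⥤ C) (adjIJ : I ⊣ J)
    (hIL : I ⋙ L.toFunctor = L.toFunctor ⋙ I)
    (hIδ : HEq (Functor.whiskerRight L.δ I) (Functor.whiskerLeft I L.δ))
    (hIε : HEq (Functor.whiskerRight L.ε I) (Functor.whiskerLeft I L.ε)) :
    ISeparable L.cofree I ↔ ISeparable R.free J := by
  have hobj : ∀ x : C, L.obj (I.obj x) = I.obj (L.obj x) := fun x =>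
    Functor.congr_obj hIL x
  have hmap : ∀ {x y : C} (f : x ⟶ y),
      L.map (I.map f) = eqToHom (hobj x) ≫ I.map (L.map f) ≫ eqToHom (hobj y).symm := by
    intro x y f
    exact Functor.congr_hom hIL f
  have hmap' : ∀ {x y : C} (f : x ⟶ y),
      eqToHom (hobj x).symm ≫ L.map (I.map f) = I.map (L.map f) ≫ eqToHom (hobj y).symm := by
    intro x y f
    rw [hmap f, ← Category.assoc, eqToHom_trans, eqToHom_refl, Category.id_comp]
  have hmap'' : ∀ {x y : C} (f : x ⟶ y),
      eqToHom (hobj x) ≫ I.map (L.map f) = L.map (I.map f) ≫ eqToHom (hobj y) := by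
    intro x y f
    rw [hmap f]
    simp
  have hε : ∀ x : C, I.map (L.ε.app x)
      = eqToHom (hobj x).symm ≫ L.ε.app (I.obj x) := by
    intro x
    have hG : (𝟭 C ⋙ I) = (I ⋙ 𝟭 C) := by
      rw [Functor.id_comp, Functor.comp_id]
    have h := natTrans_heq_app hIL.symm hG hIε x
    rw [show (Functor.whiskerRight L.ε I).app x = I.map (L.ε.app x) from rfl,
      show (Functor.whiskerLeft I L.ε).app x = L.ε.app (I.obj x) from rfl] at h
    rw [h]
    simp
  have hε' : ∀ x : C, eqToHom (hobj x) ≫ I.map (L.ε.app x) = L.ε.app (I.obj x) := by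
    intro x
    rw [hε, ← Category.assoc, eqToHom_trans, eqToHom_refl, Category.id_comp]
  rw [cofree_iff_sepT, free_iff_sepT L R adj hη]
  constructor
  · rintro ⟨T, Tnat, Tnorm⟩
    refine ⟨fun a b f => adjIJ.unit.app (J.obj a)
        ≫ J.map (T (J.obj a) (J.obj b) (adjIJ.unit.app (L.obj (J.obj a))
          ≫ J.map (eqToHom (hobj (J.obj a)).symm ≫ L.map (adjIJ.counit.app a) ≫ f)))
        ≫ J.map (adjIJ.counit.app b), ?_, ?_⟩
    · intro a' a b b' u v f
      dsimp only
      -- rewrite the argument of `T`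
      have hx : (eqToHom (hobj (J.obj a')).symm ≫ L.map (adjIJ.counit.app a')
            ≫ L.map u ≫ f ≫ v)
          = I.map (L.map (J.map u))
            ≫ (eqToHom (hobj (J.obj a)).symm ≫ L.map (adjIJ.counit.app a) ≫ f) ≫ v := by
        have h1 : adjIJ.counit.app a' ≫ u = I.map (J.map u) ≫ adjIJ.counit.app a := by
          simpa using (adjIJ.counit.naturality u).symm
        slice_lhs 2 3 => rw [← Functor.map_comp, h1, Functor.map_comp]
        slice_lhs 1 2 => rw [hmap' (J.map u)]
        simp only [Category.assoc]
      have hA : (adjIJ.unit.app (L.obj (J.obj a'))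
            ≫ J.map (eqToHom (hobj (J.obj a')).symm ≫ L.map (adjIJ.counit.app a')
              ≫ L.map u ≫ f ≫ v))
          = L.map (J.map u) ≫ (adjIJ.unit.app (L.obj (J.obj a))
              ≫ J.map (eqToHom (hobj (J.obj a)).symm ≫ L.map (adjIJ.counit.app a) ≫ f))
            ≫ J.map v := by
        rw [hx]
        have h2 : adjIJ.unit.app (L.obj (J.obj a')) ≫ J.map (I.map (L.map (J.map u)))
            = L.map (J.map u) ≫ adjIJ.unit.app (L.obj (J.obj a)) := by
          simpa using (adjIJ.unit.naturality (L.map (J.map u))).symm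
        rw [Functor.map_comp, ← Category.assoc, h2, Functor.map_comp]
        simp only [Category.assoc]
      rw [hA, Tnat]
      have hu : adjIJ.unit.app (J.obj a') ≫ J.map (I.map (J.map u))
          = J.map u ≫ adjIJ.unit.app (J.obj a) := by
        simpa using (adjIJ.unit.naturality (J.map u)).symm
      have hv : J.map (I.map (J.map v)) ≫ J.map (adjIJ.counit.app b')
          = J.map (adjIJ.counit.app b) ≫ J.map v := by
        rw [← Functor.map_comp, ← Functor.map_comp]
        congr 1
        simpa using adjIJ.counit.naturality v
      simp only [Functor.map_comp, Category.assoc]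
      rw [reassoc_of% hu, hv]
    · intro a b g
      dsimp only
      have hx : (eqToHom (hobj (J.obj a)).symm ≫ L.map (adjIJ.counit.app a)
            ≫ L.ε.app a ≫ g)
          = I.map (L.ε.app (J.obj a)) ≫ adjIJ.counit.app a ≫ g := by
        have h1 : L.map (adjIJ.counit.app a) ≫ L.ε.app a
            = L.ε.app (I.obj (J.obj a)) ≫ adjIJ.counit.app a := by
          simpa using L.ε.naturality (adjIJ.counit.app a)
        slice_lhs 2 3 => rw [h1]
        slice_lhs 1 2 => rw [show eqToHom (hobj (J.obj a)).symm
          ≫ L.ε.app (I.obj (J.obj a)) = I.map (L.ε.app (J.obj a)) from (hε _).symm]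
        simp only [Category.assoc]
      have hA : (adjIJ.unit.app (L.obj (J.obj a))
            ≫ J.map (eqToHom (hobj (J.obj a)).symm ≫ L.map (adjIJ.counit.app a)
              ≫ L.ε.app a ≫ g))
          = L.ε.app (J.obj a) ≫ J.map g := by
        rw [hx]
        have h2 : adjIJ.unit.app (L.obj (J.obj a)) ≫ J.map (I.map (L.ε.app (J.obj a)))
            = L.ε.app (J.obj a) ≫ adjIJ.unit.app (J.obj a) := by
          simpa using (adjIJ.unit.naturality (L.ε.app (J.obj a))).symm
        rw [Functor.map_comp, ← Category.assoc, h2, Functor.map_comp]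
        slice_lhs 2 3 => rw [adjIJ.right_triangle_components a]
        simp
      rw [hA, Tnorm]
      have h3 : I.map (J.map g) ≫ adjIJ.counit.app b = adjIJ.counit.app a ≫ g := by
        simpa using adjIJ.counit.naturality g
      rw [← Functor.map_comp, h3, Functor.map_comp, ← Category.assoc,
        adjIJ.right_triangle_components a, Category.id_comp]
  · rintro ⟨T, Tnat, Tnorm⟩
    refine ⟨fun a b f => I.map (adjIJ.unit.app a)
        ≫ I.map (T (I.obj a) (I.obj b) (eqToHom (hobj a) ≫ I.map f))
        ≫ adjIJ.counit.app (I.obj b), ?_, ?_⟩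
    · intro a' a b b' u v f
      dsimp only
      have harg : (eqToHom (hobj a') ≫ I.map (L.map u ≫ f ≫ v))
          = L.map (I.map u) ≫ (eqToHom (hobj a) ≫ I.map f) ≫ I.map v := by
        rw [Functor.map_comp, Functor.map_comp, ← Category.assoc, hmap'' u]
        simp only [Category.assoc]
      rw [harg, Tnat]
      have hu : I.map (adjIJ.unit.app a') ≫ I.map (J.map (I.map u))
          = I.map u ≫ I.map (adjIJ.unit.app a) := by
        rw [← Functor.map_comp, ← Functor.map_comp]
        congr 1
        simpa using (adjIJ.unit.naturality u).symm
      have hv : I.map (J.map (I.map v)) ≫ adjIJ.counit.app (I.obj b')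
          = adjIJ.counit.app (I.obj b) ≫ I.map v := by
        simpa using adjIJ.counit.naturality (I.map v)
      simp only [Functor.map_comp, Category.assoc]
      rw [reassoc_of% hu, hv]
    · intro a b g
      dsimp only
      have harg : (eqToHom (hobj a) ≫ I.map (L.ε.app a ≫ g))
          = L.ε.app (I.obj a) ≫ I.map g := by
        rw [Functor.map_comp, ← Category.assoc, hε']
      rw [harg, Tnorm]
      have h3 : I.map (J.map (I.map g)) ≫ adjIJ.counit.app (I.obj b)
          = adjIJ.counit.app (I.obj a) ≫ I.map g := by
        simpa using adjIJ.counit.naturality (I.map g)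
      rw [h3, ← Category.assoc, adjIJ.left_triangle_components a, Category.id_comp]
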